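/- Let A_0(x) be a formal power series with zero constant term satisfying A_0 = 2x(1+A_0)^3, and let A_1 = (1+A_0)^2. Then for n ≥ 1, the coefficient of x^n in A_1 equals (2^{n+1}/n)·C(3n+1, n-1). -/

import Mathlib

open PowerSeries

/-- Explicit formula for the coefficient of `x^n` in `(1+A₀)^k`. -/
noncomputable def fAux : ℕ → ℕ → ℚ
  | 0, _ => 1
  | (n+1), k => (k : ℚ) / (n+1) * 2 ^ (n+1) * Nat.choose (3*n+k+2) n

lemma fAux_key (j k : ℕ) :
    (j+1) * Nat.choose (3*j+k+5) (j+1) = (2*j+k+5) * Nat.choose (3*j+k+5) j := by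
  have h := Nat.choose_succ_right_eq (3*j+k+5) j
  have e : 3*j+k+5-j = 2*j+k+5 := by omega
  rw [e] at h
  rw [Nat.mul_comm (j+1), h, Nat.mul_comm]

lemma fAux_rec_aux (j k : ℕ) :
    ((k:ℚ)+1) / ((j:ℚ)+2) * 2 ^ (j+2) * Nat.choose (3*j+k+5+1) (j+1)
      = (k:ℚ) / ((j:ℚ)+2) * 2 ^ (j+2) * Nat.choose (3*j+k+5) (j+1)
        + 2 * (((k:ℚ)+3) / ((j:ℚ)+1) * 2 ^ (j+1) * Nat.choose (3*j+k+5) j) := by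
  have h1 : ((Nat.choose (3*j+k+5+1) (j+1) : ℚ)) =
      (Nat.choose (3*j+k+5) j : ℚ) + (Nat.choose (3*j+k+5) (j+1) : ℚ) := by
    exact_mod_cast Nat.choose_succ_succ' (3*j+k+5) j
  have h2 : ((j:ℚ)+1) * (Nat.choose (3*j+k+5) (j+1) : ℚ) =
      (2*(j:ℚ)+(k:ℚ)+5) * (Nat.choose (3*j+k+5) j : ℚ) := by
    exact_mod_cast fAux_key j k
  have hj1 : ((j:ℚ)+2) ≠ 0 := by positivity
  have hj2 : ((j:ℚ)+1) ≠ 0 := by positivity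
  linear_combination (norm := skip) ((k:ℚ)+1)/((j:ℚ)+2)*(2:ℚ)^(j+2)*h1 + (2:ℚ)^(j+2)/(((j:ℚ)+2)*((j:ℚ)+1))*h2
  field_simp
  ring

lemma fAux_rec (m k : ℕ) : fAux (m+1) (k+1) = fAux (m+1) k + 2 * fAux m (k+3) := by
  cases m with
  | zero =>
    simp [fAux]
    ring
  | succ j =>
    simp only [fAux]
    have e1 : 3*(j+1)+(k+1)+2 = 3*j+k+5+1 := by ring
    have e2 : 3*(j+1)+k+2 = 3*j+k+5 := by ring
    have e3 : 3*j+(k+3)+2 = 3*j+k+5 := by ring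
    rw [e1, e2, e3]
    have := fAux_rec_aux j k
    push_cast at this ⊢
    convert this using 2 <;> ring

theorem stmt8 (A₀ : PowerSeries ℚ) (hc : constantCoeff A₀ = 0)
    (h : A₀ = 2 * X * (1 + A₀) ^ 3) :
    ∀ n : ℕ, 1 ≤ n →
      coeff n ((1 + A₀) ^ 2) = 2 ^ (n + 1) / (n : ℚ) * Nat.choose (3 * n + 1) (n - 1) := by
  have hu : (1 + A₀ : PowerSeries ℚ) = 1 + 2 * X * (1 + A₀) ^ 3 := by
    nth_rewrite 1 [h]; rfl
  have hpow : ∀ k : ℕ, (1 + A₀) ^ (k+1) = (1 + A₀) ^ k + 2 * X * (1 + A₀) ^ (k+3) := by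
    intro k
    have : (1 + A₀) ^ (k+1) = (1 + 2 * X * (1 + A₀) ^ 3) * (1 + A₀) ^ k := by
      rw [← hu, pow_succ, mul_comm]
    rw [this]; ring
  have main : ∀ n k : ℕ, coeff n ((1 + A₀) ^ k) = fAux n k := by
    intro n
    induction n with
    | zero =>
      intro k
      rw [coeff_zero_eq_constantCoeff, map_pow, map_add, map_one, hc]
      simp [fAux]
    | succ n ih =>
      intro k
      induction k with
      | zero => simp [fAux]
      | succ k ihk =>
        rw [hpow k, map_add, ihk]
        have hx : coeff (n+1) (2 * X * (1 + A₀) ^ (k+3)) =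
            2 * coeff n ((1 + A₀) ^ (k+3)) := by
          rw [show (2 * X * (1 + A₀) ^ (k+3) : PowerSeries ℚ)
              = X * ((1 + A₀) ^ (k+3) + (1 + A₀) ^ (k+3)) by ring,
            coeff_succ_X_mul, map_add]
          ring
        rw [hx, ih (k+3), fAux_rec]
  intro n hn
  obtain ⟨m, rfl⟩ : ∃ m, n = m + 1 := ⟨n - 1, by omega⟩
  rw [main (m+1) 2]
  simp only [fAux, Nat.add_sub_cancel]
  rw [show 3*(m+1)+1 = 3*m+2+2 by ring]
  push_cast
  have hm : ((m:ℚ)+1) ≠ 0 := by positivity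
  field_simp
  ring
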